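/- Let (𝕋, 𝔽) be a hereditary torsion pair of finite type of left R-modules. Then 𝔽 is closed under pure quotients: if F ∈ 𝔽 and 0 → F′ → F → F″ → 0 is a pure exact sequence, then F″ ∈ 𝔽 (and also F′ ∈ 𝔽). -/

import Mathlib

universe u

open TensorProduct CategoryTheory DirectSum

noncomputable section

/-- The submodule of relations presenting the tensor product `Q ⊗_R M` as a quotient of
`Q ⊗_ℤ M`, for a right `R`-module `Q` and a left `R`-module `M`. -/
def tensorRelations (R : Type u) [Ring R] (Q : Type u) [AddCommGroup Q] [Module Rᵐᵒᵖ Q]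
    (M : Type u) [AddCommGroup M] [Module R M] : Submodule ℤ (TensorProduct ℤ Q M) :=
  Submodule.span ℤ
    {x | ∃ (q : Q) (r : R) (m : M), x = (MulOpposite.op r • q) ⊗ₜ[ℤ] m - q ⊗ₜ[ℤ] (r • m)}

/-- The map `Q ⊗_R M → Q ⊗_R N` induced by `f` is injective, where `Q ⊗_R -` is realized
as the quotient of `Q ⊗_ℤ -` by `tensorRelations`. -/
def StaysInjective (R : Type u) [Ring R] (Q : Type u) [AddCommGroup Q] [Module Rᵐᵒᵖ Q]
    {M N : Type u} [AddCommGroup M] [Module R M] [AddCommGroup N] [Module R N]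
    (f : M →ₗ[R] N) : Prop :=
  ∀ z : TensorProduct ℤ Q M,
    LinearMap.lTensor Q f.toAddMonoidHom.toIntLinearMap z ∈ tensorRelations R Q N →
      z ∈ tensorRelations R Q M

/-- `f` is a pure monomorphism of left `R`-modules: it is injective and stays injective
after tensoring with every right `R`-module. -/
def IsPureMono (R : Type u) [Ring R] {M N : Type u} [AddCommGroup M] [Module R M]
    [AddCommGroup N] [Module R N] (f : M →ₗ[R] N) : Prop :=
  Function.Injective f ∧
    ∀ (Q : Type u) [AddCommGroup Q] [Module Rᵐᵒᵖ Q], StaysInjective R Q f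

/-- `N` is a pure submodule of `M`. -/
def IsPureSubmodule (R : Type u) [Ring R] {M : Type u} [AddCommGroup M] [Module R M]
    (N : Submodule R M) : Prop :=
  IsPureMono R N.subtype

/-- `0 → M' → M → M'' → 0` is a pure exact sequence of left `R`-modules. -/
def IsPureExactSeq (R : Type u) [Ring R] {M' M M'' : Type u}
    [AddCommGroup M'] [Module R M'] [AddCommGroup M] [Module R M]
    [AddCommGroup M''] [Module R M'']
    (f : M' →ₗ[R] M) (g : M →ₗ[R] M'') : Prop :=
  Function.Surjective g ∧ Function.Exact f g ∧ IsPureMono R f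

/-- `(𝕋, 𝔽)` is a torsion pair of left `R`-modules: the two classes intersect only in zero
modules, `𝕋` is closed under quotients, `𝔽` is closed under submodules (both closures are
phrased so as to include closure under isomorphisms), and every module is an extension of a
module of `𝔽` by a module of `𝕋`. -/
structure IsTorsionPair (R : Type u) [Ring R] (𝕋 𝔽 : Set (ModuleCat.{u} R)) : Prop where
  inter_zero : ∀ M : ModuleCat.{u} R, M ∈ 𝕋 → M ∈ 𝔽 → Subsingleton M
  torsion_quot_closed : ∀ (M N : ModuleCat.{u} R) (g : M ⟶ N), Function.Surjective g →
    M ∈ 𝕋 → N ∈ 𝕋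
  free_sub_closed : ∀ (M N : ModuleCat.{u} R) (f : M ⟶ N), Function.Injective f →
    N ∈ 𝔽 → M ∈ 𝔽
  exists_seq : ∀ M : ModuleCat.{u} R, ∃ T₀ : Submodule R M,
    ModuleCat.of R T₀ ∈ 𝕋 ∧ ModuleCat.of R (↥M ⧸ T₀) ∈ 𝔽

/-- A torsion pair is hereditary if the torsion class is also closed under submodules. -/
def IsHereditary (R : Type u) [Ring R] (𝕋 : Set (ModuleCat.{u} R)) : Prop :=
  ∀ (M N : ModuleCat.{u} R) (f : M ⟶ N), Function.Injective f → N ∈ 𝕋 → M ∈ 𝕋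

/-- A torsion pair is of finite type: every left ideal `𝔞` with `R/𝔞` torsion contains a
finitely generated left ideal `𝔟` with `R/𝔟` torsion. -/
def IsOfFiniteType (R : Type u) [Ring R] (𝕋 : Set (ModuleCat.{u} R)) : Prop :=
  ∀ 𝔞 : Submodule R R, ModuleCat.of R (R ⧸ 𝔞) ∈ 𝕋 →
    ∃ 𝔟 : Submodule R R, 𝔟 ≤ 𝔞 ∧ 𝔟.FG ∧ ModuleCat.of R (R ⧸ 𝔟) ∈ 𝕋

section PureSolve

variable {R : Type u} [Ring R] {F' F : Type u} [AddCommGroup F'] [Module R F']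
  [AddCommGroup F] [Module R F]

theorem pure_solve (f : F' →ₗ[R] F) (hf : IsPureMono R f) {n : ℕ} (r : Fin n → R)
    (a : Fin n → F') (y₀ : F) (h : ∀ i, f (a i) = r i • y₀) :
    ∃ w : F', ∀ i, a i = r i • w := by
  classical
  set S : Submodule Rᵐᵒᵖ (Fin n → R) := Submodule.span Rᵐᵒᵖ {r} with hS
  let Q : Type u := (Fin n → R) ⧸ S
  let e : Fin n → (Fin n → R) := fun i => Pi.single i (1 : R)
  let z : TensorProduct ℤ Q F' :=
    ∑ i : Fin n, (Submodule.Quotient.mk (e i) : Q) ⊗ₜ[ℤ] a i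
  have key : z ∈ tensorRelations R Q F' := by
    apply hf.2 Q z
    have himg : LinearMap.lTensor Q f.toAddMonoidHom.toIntLinearMap z
        = ∑ i : Fin n, (Submodule.Quotient.mk (e i) : Q) ⊗ₜ[ℤ] (r i • y₀) := by
      rw [map_sum]
      refine Finset.sum_congr rfl fun i _ => ?_
      rw [LinearMap.lTensor_tmul]
      congr 1
      exact h i
    rw [himg]
    have hgen : ∀ i : Fin n,
        ((MulOpposite.op (r i) • (Submodule.Quotient.mk (e i) : Q)) ⊗ₜ[ℤ] y₀
          - (Submodule.Quotient.mk (e i) : Q) ⊗ₜ[ℤ] (r i • y₀)) ∈ tensorRelations R Q F :=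
      fun i => Submodule.subset_span ⟨_, r i, y₀, rfl⟩
    have hzero : (∑ i : Fin n,
        (MulOpposite.op (r i) • (Submodule.Quotient.mk (e i) : Q)) ⊗ₜ[ℤ] y₀) = 0 := by
      rw [← TensorProduct.sum_tmul]
      have h1 : (∑ i : Fin n, MulOpposite.op (r i) • (Submodule.Quotient.mk (e i) : Q))
          = Submodule.Quotient.mk (∑ i : Fin n, MulOpposite.op (r i) • e i) := by
        simp_rw [← Submodule.mkQ_apply, ← map_smul, ← map_sum]
      have h2 : (∑ i : Fin n, MulOpposite.op (r i) • e i) = r := by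
        funext j
        simp [e, Pi.single_apply, MulOpposite.smul_eq_mul_unop, Finset.sum_ite_eq]
      rw [h1, h2]
      rw [show (Submodule.Quotient.mk r : Q) = 0 from
        (Submodule.Quotient.mk_eq_zero S).mpr (Submodule.mem_span_singleton_self r)]
      rw [TensorProduct.zero_tmul]
    have hsum : (∑ i : Fin n, (Submodule.Quotient.mk (e i) : Q) ⊗ₜ[ℤ] (r i • y₀))
        = (∑ i : Fin n,
            (MulOpposite.op (r i) • (Submodule.Quotient.mk (e i) : Q)) ⊗ₜ[ℤ] y₀)
          - ∑ i : Fin n,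
            ((MulOpposite.op (r i) • (Submodule.Quotient.mk (e i) : Q)) ⊗ₜ[ℤ] y₀
              - (Submodule.Quotient.mk (e i) : Q) ⊗ₜ[ℤ] (r i • y₀)) := by
      rw [← Finset.sum_sub_distrib]
      exact Finset.sum_congr rfl fun i _ => by abel
    rw [hsum, hzero, zero_sub]
    exact neg_mem (Submodule.sum_mem _ fun i _ => hgen i)
  -- extraction
  let dmap0 : F' →+ (Fin n → F') :=
    { toFun := fun w i => r i • w
      map_zero' := by funext i; simp
      map_add' := fun u v => by funext i; simp [smul_add] }
  let D : Submodule ℤ (Fin n → F') := LinearMap.range dmap0.toIntLinearMap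
  let Gq := (Fin n → F') ⧸ D
  let inner2 : (Fin n → R) →ₗ[ℤ] F' →ₗ[ℤ] (Fin n → F') :=
    LinearMap.mk₂ ℤ (fun v u => fun i => v i • u)
      (fun v v' u => by funext i; simp [add_smul])
      (fun k v u => by
        funext i; show ((k • v) i) • u = k • (v i • u); rw [Pi.smul_apply, smul_assoc])
      (fun v u u' => by funext i; simp [smul_add])
      (fun k v u => by funext i; simp [smul_comm k])
  let β : (Fin n → R) →ₗ[ℤ] F' →ₗ[ℤ] Gq :=
    (LinearMap.llcomp ℤ F' (Fin n → F') Gq D.mkQ) ∘ₗ inner2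
  have hker : S.restrictScalars ℤ ≤ LinearMap.ker β := by
    intro v hv
    have hv' : v ∈ S := hv
    rw [hS, Submodule.mem_span_singleton] at hv'
    obtain ⟨c, rfl⟩ := hv'
    rw [LinearMap.mem_ker]
    ext u
    have : (fun i => (c • r) i • u) = dmap0 (c.unop • u) := by
      funext i
      show ((c • r) i) • u = r i • (c.unop • u)
      rw [Pi.smul_apply, MulOpposite.smul_eq_mul_unop, mul_smul]
    show D.mkQ (fun i => (c • r) i • u) = 0
    rw [← LinearMap.mem_ker, Submodule.ker_mkQ, this]
    exact ⟨c.unop • u, rfl⟩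
  let bQ : Q →ₗ[ℤ] F' →ₗ[ℤ] Gq :=
    (Submodule.liftQ (S.restrictScalars ℤ) β hker).comp
      (Submodule.Quotient.restrictScalarsEquiv ℤ S).symm.toLinearMap
  let Φ : TensorProduct ℤ Q F' →ₗ[ℤ] Gq := TensorProduct.lift bQ
  have hΦmk : ∀ (v : Fin n → R) (u : F'),
      Φ ((Submodule.Quotient.mk v : Q) ⊗ₜ[ℤ] u)
        = Submodule.Quotient.mk (fun i => v i • u) := by
    intro v u
    show bQ (Submodule.Quotient.mk v) u = _
    simp only [bQ, LinearMap.comp_apply, LinearEquiv.coe_coe,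
      Submodule.Quotient.restrictScalarsEquiv_symm_mk, Submodule.liftQ_apply, β,
      LinearMap.llcomp_apply, inner2, LinearMap.mk₂_apply, Submodule.mkQ_apply]
    rfl
  have hΦrel : tensorRelations R Q F' ≤ LinearMap.ker Φ := by
    rw [tensorRelations, Submodule.span_le]
    rintro x ⟨q, s, m, rfl⟩
    obtain ⟨v, rfl⟩ := Submodule.Quotient.mk_surjective S q
    rw [SetLike.mem_coe, LinearMap.mem_ker, map_sub]
    rw [show MulOpposite.op s • (Submodule.Quotient.mk v : Q)
        = Submodule.Quotient.mk (MulOpposite.op s • v) from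
      (Submodule.Quotient.mk_smul S _ _).symm]
    rw [hΦmk, hΦmk]
    rw [sub_eq_zero]
    congr 1
    funext i
    show ((MulOpposite.op s • v) i) • m = v i • (s • m)
    rw [Pi.smul_apply, MulOpposite.smul_eq_mul_unop, MulOpposite.unop_op, mul_smul]
  have hΦz : Φ z = Submodule.Quotient.mk a := by
    show Φ (∑ i : Fin n, (Submodule.Quotient.mk (e i) : Q) ⊗ₜ[ℤ] a i) = _
    rw [map_sum]
    have : ∀ i : Fin n, Φ ((Submodule.Quotient.mk (e i) : Q) ⊗ₜ[ℤ] a i)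
        = Submodule.Quotient.mk (fun j => e i j • a i) := fun i => hΦmk _ _
    rw [Finset.sum_congr rfl fun i _ => this i]
    simp_rw [← Submodule.mkQ_apply, ← map_sum]
    congr 1
    funext j
    simp [e, Pi.single_apply, ite_smul, Finset.sum_ite_eq]
  have : (Submodule.Quotient.mk a : Gq) = 0 := by
    rw [← hΦz]
    exact hΦrel key
  rw [Submodule.Quotient.mk_eq_zero] at this
  obtain ⟨w, hw⟩ := this
  exact ⟨w, fun i => by rw [← congrFun hw i]; rfl⟩

end PureSolve

/-- For a hereditary torsion pair `(𝕋, 𝔽)` of finite type, the torsion free class `𝔽` is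
closed under pure quotients (and pure submodules): if `F ∈ 𝔽` and
`0 → F' → F → F'' → 0` is pure exact, then `F'' ∈ 𝔽` and `F' ∈ 𝔽`. -/
theorem stmt18 (R : Type u) [Ring R] (𝕋 𝔽 : Set (ModuleCat.{u} R))
    (htp : IsTorsionPair R 𝕋 𝔽) (hher : IsHereditary R 𝕋) (hft : IsOfFiniteType R 𝕋)
    (F' F F'' : ModuleCat.{u} R) (f : F' ⟶ F) (g : F ⟶ F'')
    (hpure : IsPureExactSeq R (f.hom : F' →ₗ[R] F) (g.hom : F →ₗ[R] F''))
    (hF : F ∈ 𝔽) :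
    F'' ∈ 𝔽 ∧ F' ∈ 𝔽 := by
  obtain ⟨hgsurj, hexact, hfpure⟩ := hpure
  have hF' : F' ∈ 𝔽 := htp.free_sub_closed F' F f hfpure.1 hF
  refine ⟨?_, hF'⟩
  obtain ⟨T₀, hT₀, hQuot⟩ := htp.exists_seq F''
  have hx0 : ∀ x ∈ T₀, x = (0 : F'') := by
    intro x hx
    set φ := LinearMap.toSpanSingleton R F'' x with hφ
    have hrange_le : LinearMap.range φ ≤ T₀ := by
      rintro _ ⟨s, rfl⟩
      exact T₀.smul_mem s hx
    have hcyc : ModuleCat.of R (LinearMap.range φ) ∈ 𝕋 :=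
      hher (ModuleCat.of R (LinearMap.range φ)) (ModuleCat.of R T₀)
        (ModuleCat.ofHom (Submodule.inclusion hrange_le))
        (Submodule.inclusion_injective hrange_le) hT₀
    have hquotT : ModuleCat.of R (R ⧸ LinearMap.ker φ) ∈ 𝕋 := by
      refine htp.torsion_quot_closed (ModuleCat.of R (LinearMap.range φ))
        (ModuleCat.of R (R ⧸ LinearMap.ker φ))
        (ModuleCat.ofHom φ.quotKerEquivRange.symm.toLinearMap)
        φ.quotKerEquivRange.symm.surjective hcyc
    obtain ⟨𝔟, hba, hbfg, hbT⟩ := hft _ hquotT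
    obtain ⟨n, r, hrspan⟩ := Submodule.fg_iff_exists_fin_generating_family.mp hbfg
    have hrx : ∀ i, r i • x = 0 := by
      intro i
      have hmem : r i ∈ 𝔟 := by
        rw [← hrspan]; exact Submodule.subset_span ⟨i, rfl⟩
      have := hba hmem
      rw [LinearMap.mem_ker, hφ, LinearMap.toSpanSingleton_apply] at this
      exact this
    obtain ⟨y₀, hy₀⟩ := hgsurj x
    have ha : ∀ i, ∃ a : F', f a = r i • y₀ := by
      intro i
      have h0 : g (r i • y₀) = 0 := by
        rw [map_smul, hy₀, hrx i]
      obtain ⟨a, ha⟩ := (hexact (r i • y₀)).mp h0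
      exact ⟨a, ha⟩
    choose a haf using ha
    obtain ⟨w, hw⟩ := pure_solve (f.hom : F' →ₗ[R] F) hfpure r a y₀ haf
    set y : F := y₀ - f w with hy
    have hgy : g y = x := by
      rw [hy, map_sub, hy₀, hexact.apply_apply_eq_zero w, sub_zero]
    have hry : ∀ s ∈ 𝔟, s • y = 0 := by
      have hgen : ∀ i, r i • y = 0 := fun i => by
        rw [hy, smul_sub, ← map_smul, ← hw i, haf i, sub_self]
      intro s hs
      rw [← hrspan] at hs
      induction hs using Submodule.span_induction with
      | mem v hv => obtain ⟨i, rfl⟩ := hv; exact hgen i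
      | zero => rw [zero_smul]
      | add v v' _ _ h1 h2 => rw [add_smul, h1, h2, add_zero]
      | smul t v _ h1 => rw [smul_eq_mul, mul_smul, h1, smul_zero]
    set ψ := LinearMap.toSpanSingleton R F y with hψ
    have hkerψ : 𝔟 ≤ LinearMap.ker ψ.rangeRestrict := by
      intro s hs
      rw [LinearMap.ker_rangeRestrict, LinearMap.mem_ker, hψ,
        LinearMap.toSpanSingleton_apply]
      exact hry s hs
    set ℓ : (R ⧸ 𝔟) →ₗ[R] LinearMap.range ψ := Submodule.liftQ 𝔟 ψ.rangeRestrict hkerψ with hℓ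
    have hℓsurj : Function.Surjective ℓ := by
      intro t
      obtain ⟨s, hs⟩ := ψ.surjective_rangeRestrict t
      exact ⟨Submodule.Quotient.mk s, by rw [hℓ, Submodule.liftQ_apply, hs]⟩
    have hyT : ModuleCat.of R (LinearMap.range ψ) ∈ 𝕋 :=
      htp.torsion_quot_closed (ModuleCat.of R (R ⧸ 𝔟)) (ModuleCat.of R (LinearMap.range ψ))
        (ModuleCat.ofHom ℓ) hℓsurj hbT
    have hyF : ModuleCat.of R (LinearMap.range ψ) ∈ 𝔽 :=
      htp.free_sub_closed (ModuleCat.of R (LinearMap.range ψ)) F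
        (ModuleCat.ofHom (LinearMap.range ψ).subtype) (Submodule.injective_subtype _) hF
    have hsub : Subsingleton (LinearMap.range ψ) := htp.inter_zero _ hyT hyF
    have hymem : y ∈ LinearMap.range ψ := ⟨1, one_smul R y⟩
    have hy0 : y = 0 := by
      have := Subsingleton.elim (⟨y, hymem⟩ : LinearMap.range ψ)
        ⟨0, Submodule.zero_mem _⟩
      exact congrArg Subtype.val this
    rw [← hgy, hy0, map_zero]
  have hT₀bot : T₀ = ⊥ := by
    rw [eq_bot_iff]
    intro x hx
    rw [Submodule.mem_bot]
    exact hx0 x hx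
  refine htp.free_sub_closed F'' (ModuleCat.of R (↥F'' ⧸ T₀)) (ModuleCat.ofHom T₀.mkQ) ?_ hQuot
  rw [← LinearMap.ker_eq_bot]
  show LinearMap.ker T₀.mkQ = ⊥
  rw [Submodule.ker_mkQ]
  exact hT₀bot
end
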